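/- For all Δφ, Δφ', Δρ ∈ ℝ, the infimum over v ∈ ℂ of F(Δφ, Δρ, v) equals the infimum over v ∈ ℂ of F(Δφ', Δρ, v). Consequently, for every Δρ₀ ∈ ℝ, Δρ₀ minimizes the function Δρ ↦ inf_{v∈ℂ} F(Δφ, Δρ, v) if and only if Δρ₀ minimizes the function Δρ ↦ inf_{v∈ℂ} F(Δφ', Δρ, v); that is, the optimal range bias and the optimal objective value of the single-sensor registration problem do not depend on the azimuth bias Δφ. -/

import Mathlib

/-- The index `k` (first of a consecutive pair) as an element of `Fin K`. -/
def loIdx {K : ℕ} (k : Fin (K - 1)) : Fin K := ⟨k.1, by have h := k.2; omega⟩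

/-- The index `k+1` (second of a consecutive pair) as an element of `Fin K`. -/
def hiIdx {K : ℕ} (k : Fin (K - 1)) : Fin K := ⟨k.1 + 1, by have h := k.2; omega⟩

/-- The bias-corrected measurement `g_k(Δφ, Δρ) = λ⁻¹ (ρ_k + Δρ) exp(i(φ_k + Δφ)) ∈ ℂ`. -/
noncomputable def gmeas {K : ℕ} (ρ φ : Fin K → ℝ) (lam : ℝ) (Δφ Δρ : ℝ) (k : Fin K) : ℂ :=
  ((lam⁻¹ * (ρ k + Δρ) : ℝ) : ℂ) * Complex.exp (Complex.I * ((φ k + Δφ : ℝ) : ℂ))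

/-- The single-sensor least-squares objective
`F(Δφ, Δρ, v) = Σ_{k=1}^{K−1} |g_{k+1}(Δφ, Δρ) − g_k(Δφ, Δρ) − T_k v|²`. -/
noncomputable def Fobj {K : ℕ} (ρ φ : Fin K → ℝ) (T : Fin (K - 1) → ℝ) (lam : ℝ)
    (Δφ Δρ : ℝ) (v : ℂ) : ℝ :=
  ∑ k : Fin (K - 1),
    ‖gmeas ρ φ lam Δφ Δρ (hiIdx k) - gmeas ρ φ lam Δφ Δρ (loIdx k)
      - (T k : ℂ) * v‖ ^ 2

lemma gmeas_rot {K : ℕ} (ρ φ : Fin K → ℝ) (lam Δφ Δφ' Δρ : ℝ) (k : Fin K) :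
    gmeas ρ φ lam Δφ' Δρ k =
      Complex.exp (Complex.I * ((Δφ' - Δφ : ℝ) : ℂ)) * gmeas ρ φ lam Δφ Δρ k := by
  unfold gmeas
  rw [mul_comm (Complex.exp _), mul_assoc, ← Complex.exp_add]
  congr 1
  push_cast
  ring

lemma Fobj_rot {K : ℕ} (ρ φ : Fin K → ℝ) (T : Fin (K - 1) → ℝ) (lam Δφ Δφ' Δρ : ℝ) (v : ℂ) :
    Fobj ρ φ T lam Δφ' Δρ (Complex.exp (Complex.I * ((Δφ' - Δφ : ℝ) : ℂ)) * v) =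
      Fobj ρ φ T lam Δφ Δρ v := by
  unfold Fobj
  refine Finset.sum_congr rfl fun k _ => ?_
  rw [gmeas_rot ρ φ lam Δφ Δφ' Δρ, gmeas_rot ρ φ lam Δφ Δφ' Δρ]
  set u := Complex.exp (Complex.I * ((Δφ' - Δφ : ℝ) : ℂ)) with hu
  have habs : ‖u‖ = 1 := by
    rw [hu, Complex.norm_exp]
    simp
  have : u * gmeas ρ φ lam Δφ Δρ (hiIdx k) - u * gmeas ρ φ lam Δφ Δρ (loIdx k)
      - (T k : ℂ) * (u * v)
      = u * (gmeas ρ φ lam Δφ Δρ (hiIdx k) - gmeas ρ φ lam Δφ Δρ (loIdx k) - (T k : ℂ) * v) := by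
    ring
  rw [this, norm_mul, habs, one_mul]

/-- Theorem 1 (separation property): the partial minimum of the single-sensor objective over
the velocity `v` does not depend on the azimuth bias `Δφ`; consequently the optimal range bias
and the optimal objective value of the single-sensor registration problem are independent
of `Δφ`. -/
theorem range_bias_estimation_independent_of_azimuth
    (K : ℕ) (hK : 2 ≤ K) (ρ φ : Fin K → ℝ) (T : Fin (K - 1) → ℝ) (lam : ℝ) (hlam : 0 < lam) :
    (∀ Δφ Δφ' Δρ : ℝ,
      (⨅ v : ℂ, Fobj ρ φ T lam Δφ Δρ v) = ⨅ v : ℂ, Fobj ρ φ T lam Δφ' Δρ v) ∧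
    (∀ Δφ Δφ' Δρ₀ : ℝ,
      (∀ Δρ : ℝ, (⨅ v : ℂ, Fobj ρ φ T lam Δφ Δρ₀ v) ≤ ⨅ v : ℂ, Fobj ρ φ T lam Δφ Δρ v) ↔
      (∀ Δρ : ℝ, (⨅ v : ℂ, Fobj ρ φ T lam Δφ' Δρ₀ v) ≤ ⨅ v : ℂ, Fobj ρ φ T lam Δφ' Δρ v)) := by
  have main : ∀ Δφ Δφ' Δρ : ℝ,
      (⨅ v : ℂ, Fobj ρ φ T lam Δφ Δρ v) = ⨅ v : ℂ, Fobj ρ φ T lam Δφ' Δρ v := by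
    intro Δφ Δφ' Δρ
    have hrange : Set.range (fun v : ℂ => Fobj ρ φ T lam Δφ Δρ v)
        = Set.range (fun v : ℂ => Fobj ρ φ T lam Δφ' Δρ v) := by
      ext x
      constructor
      · rintro ⟨v, rfl⟩
        exact ⟨Complex.exp (Complex.I * ((Δφ' - Δφ : ℝ) : ℂ)) * v,
          Fobj_rot ρ φ T lam Δφ Δφ' Δρ v⟩
      · rintro ⟨v, rfl⟩
        exact ⟨Complex.exp (Complex.I * ((Δφ - Δφ' : ℝ) : ℂ)) * v,
          Fobj_rot ρ φ T lam Δφ' Δφ Δρ v⟩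
    rw [iInf, iInf, hrange]
  exact ⟨main, fun Δφ Δφ' Δρ₀ => by
    constructor
    · intro h Δρ
      rw [main Δφ' Δφ Δρ₀, main Δφ' Δφ Δρ]; exact h Δρ
    · intro h Δρ
      rw [main Δφ Δφ' Δρ₀, main Δφ Δφ' Δρ]; exact h Δρ⟩
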